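/- For each integer i ∈ [k³], the set B = ∪_{i,j∈[k]} B_{ij} (where B_{11} = {(pk−q, qk+p) : 1 ≤ p ≤ k, 0 ≤ q ≤ k−1} and B_{ij} = B_{11} + ((i−1)k², (j−1)k²)) contains exactly k points with first coordinate equal to i, and exactly k points with second coordinate equal to i. -/

import Mathlib

open Finset

/-- The set `B = ⋃_{i,j ∈ [k]} B_{ij} ⊆ ℤ²`, where
`B₁₁ = {(pk − q, qk + p) : 1 ≤ p ≤ k, 0 ≤ q ≤ k − 1}` and
`B_{ij} = B₁₁ + ((i−1)k², (j−1)k²)`. -/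
noncomputable def Bset (k : ℕ) : Finset (ℤ × ℤ) :=
  ((Finset.Icc (1 : ℤ) k ×ˢ Finset.Icc (0 : ℤ) ((k : ℤ) - 1)) ×ˢ
      (Finset.Icc (1 : ℤ) k ×ˢ Finset.Icc (1 : ℤ) k)).image
    fun x => (x.1.1 * k - x.1.2 + (x.2.1 - 1) * (k : ℤ) ^ 2,
              x.1.2 * k + x.1.1 + (x.2.2 - 1) * (k : ℤ) ^ 2)

lemma base3_unique (k a b c a' b' c' : ℤ) (hk : 0 < k)
    (ha : 0 ≤ a) (ha' : a < k) (hb : 0 ≤ b) (hb' : b < k) (hc : 0 ≤ c) (hc' : c < k)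
    (ha2 : 0 ≤ a') (ha2' : a' < k) (hb2 : 0 ≤ b') (hb2' : b' < k) (hc2 : 0 ≤ c') (hc2' : c' < k)
    (h : a + b * k + c * k ^ 2 = a' + b' * k + c' * k ^ 2) :
    a = a' ∧ b = b' ∧ c = c' := by
  have hA : a = a' := by
    have hd : k ∣ (a - a') := ⟨b' - b + (c' - c) * k, by linear_combination h⟩
    have := Int.eq_zero_of_abs_lt_dvd hd (abs_lt.mpr ⟨by omega, by omega⟩)
    omega
  subst hA
  have hk' : (k : ℤ) ≠ 0 := hk.ne'
  have h2 : b + c * k = b' + c' * k := by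
    have h3 : (b + c * k) * k = (b' + c' * k) * k := by linear_combination h
    exact mul_right_cancel₀ hk' h3
  have hB : b = b' := by
    have hd : k ∣ (b - b') := ⟨c' - c, by linear_combination h2⟩
    have := Int.eq_zero_of_abs_lt_dvd hd (abs_lt.mpr ⟨by omega, by omega⟩)
    omega
  subst hB
  have hC : c = c' := mul_right_cancel₀ hk' (by linear_combination h2)
  exact ⟨rfl, rfl, hC⟩

lemma base3_exists (k m : ℤ) (hk : 0 < k) (h1 : 0 ≤ m) (h2 : m < k ^ 3) :
    ∃ a b c, 0 ≤ a ∧ a < k ∧ 0 ≤ b ∧ b < k ∧ 0 ≤ c ∧ c < k ∧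
      a + b * k + c * k ^ 2 = m := by
  refine ⟨m % k, (m / k) % k, m / k / k, Int.emod_nonneg _ hk.ne',
    Int.emod_lt_of_pos _ hk, Int.emod_nonneg _ hk.ne', Int.emod_lt_of_pos _ hk,
    Int.ediv_nonneg (Int.ediv_nonneg h1 hk.le) hk.le, ?_, ?_⟩
  · rw [Int.ediv_lt_iff_lt_mul hk, Int.ediv_lt_iff_lt_mul hk]
    nlinarith [h2]
  · have e1 := Int.mul_ediv_add_emod m k
    have e2 := Int.mul_ediv_add_emod (m / k) k
    linear_combination e1 + k * e2

/-- For each `m ∈ [k³]`, the set `B` contains exactly `k` points with first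
coordinate `m`, and exactly `k` points with second coordinate `m`. -/
theorem Bset_coordinate_count (k : ℕ) (hk : 2 ≤ k) (m : ℤ)
    (hm : m ∈ Finset.Icc (1 : ℤ) ((k : ℤ) ^ 3)) :
    ((Bset k).filter fun b => b.1 = m).card = k ∧
    ((Bset k).filter fun b => b.2 = m).card = k := by
  rw [Finset.mem_Icc] at hm
  have hk0 : (0 : ℤ) < (k : ℤ) := by positivity
  obtain ⟨a, b, c, ha, ha', hb, hb', hc, hc', habc⟩ :=
    base3_exists (k : ℤ) (m - 1) hk0 (by omega) (by omega)
  -- injectivity of the defining map on the index set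
  have hinj : Set.InjOn
      (fun x : (ℤ × ℤ) × (ℤ × ℤ) =>
        ((x.1.1 * k - x.1.2 + (x.2.1 - 1) * (k : ℤ) ^ 2 : ℤ),
         (x.1.2 * k + x.1.1 + (x.2.2 - 1) * (k : ℤ) ^ 2 : ℤ)))
      ↑((Finset.Icc (1 : ℤ) k ×ˢ Finset.Icc (0 : ℤ) ((k : ℤ) - 1)) ×ˢ
        (Finset.Icc (1 : ℤ) k ×ˢ Finset.Icc (1 : ℤ) k)) := by
    rintro ⟨⟨p, q⟩, i, j⟩ hx ⟨⟨p', q'⟩, i', j'⟩ hy hxy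
    simp only [Finset.coe_product, Set.mem_prod, Finset.mem_coe, Finset.mem_Icc] at hx hy
    simp only [Prod.mk.injEq] at hxy
    obtain ⟨h1, h2⟩ := hxy
    have e1 : ((k : ℤ) - 1 - q) + (p - 1) * k + (i - 1) * (k : ℤ) ^ 2 =
        ((k : ℤ) - 1 - q') + (p' - 1) * k + (i' - 1) * (k : ℤ) ^ 2 := by
      linear_combination h1
    obtain ⟨u1, u2, u3⟩ := base3_unique (k : ℤ) _ _ _ _ _ _ hk0
      (by omega) (by omega) (by omega) (by omega) (by omega) (by omega)
      (by omega) (by omega) (by omega) (by omega) (by omega) (by omega) e1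
    have hq : q = q' := by omega
    have hp : p = p' := by omega
    have hi : i = i' := by omega
    subst hq hp hi
    have hj : j = j' := by
      have : (j - 1) * (k : ℤ) ^ 2 = (j' - 1) * (k : ℤ) ^ 2 := by linear_combination h2
      have := mul_right_cancel₀ (a := j - 1) (b := ((k:ℤ)^2)) (c := j' - 1)
        (by positivity) this
      omega
    subst hj
    rfl
  constructor
  · rw [Bset, Finset.filter_image,
      Finset.card_image_of_injOn (hinj.mono (by exact_mod_cast Finset.filter_subset _ _))]
    have hset : (((Finset.Icc (1 : ℤ) k ×ˢ Finset.Icc (0 : ℤ) ((k : ℤ) - 1)) ×ˢ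
        (Finset.Icc (1 : ℤ) k ×ˢ Finset.Icc (1 : ℤ) k)).filter fun x =>
          x.1.1 * k - x.1.2 + (x.2.1 - 1) * (k : ℤ) ^ 2 = m) =
        ({((b + 1 : ℤ), ((k : ℤ) - 1 - a))} : Finset (ℤ × ℤ)) ×ˢ
          (({(c + 1 : ℤ)} : Finset ℤ) ×ˢ Finset.Icc (1 : ℤ) k) := by
      ext ⟨⟨p, q⟩, i, j⟩
      simp only [Finset.mem_filter, Finset.mem_product, Finset.mem_Icc,
        Finset.mem_singleton, Prod.mk.injEq]
      constructor
      · rintro ⟨⟨⟨hp, hq⟩, hi, hj⟩, heq⟩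
        have e1 : ((k : ℤ) - 1 - q) + (p - 1) * k + (i - 1) * (k : ℤ) ^ 2 =
            a + b * k + c * (k : ℤ) ^ 2 := by linear_combination heq - habc
        obtain ⟨u1, u2, u3⟩ := base3_unique (k : ℤ) _ _ _ _ _ _ hk0
          (by omega) (by omega) (by omega) (by omega) (by omega) (by omega)
          ha ha' hb hb' hc hc' e1
        exact ⟨⟨by omega, by omega⟩, by omega, hj⟩
      · rintro ⟨⟨hp, hq⟩, hi, hj⟩
        refine ⟨⟨⟨by omega, by omega⟩, ⟨by omega, by omega⟩, hj⟩, ?_⟩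
        subst hp hq hi
        linear_combination habc
    rw [hset]
    simp [Int.toNat_of_nonneg hk0.le]
  · rw [Bset, Finset.filter_image,
      Finset.card_image_of_injOn (hinj.mono (by exact_mod_cast Finset.filter_subset _ _))]
    have hset : (((Finset.Icc (1 : ℤ) k ×ˢ Finset.Icc (0 : ℤ) ((k : ℤ) - 1)) ×ˢ
        (Finset.Icc (1 : ℤ) k ×ˢ Finset.Icc (1 : ℤ) k)).filter fun x =>
          x.1.2 * k + x.1.1 + (x.2.2 - 1) * (k : ℤ) ^ 2 = m) =
        ({((a + 1 : ℤ), (b : ℤ))} : Finset (ℤ × ℤ)) ×ˢ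
          (Finset.Icc (1 : ℤ) k ×ˢ ({(c + 1 : ℤ)} : Finset ℤ)) := by
      ext ⟨⟨p, q⟩, i, j⟩
      simp only [Finset.mem_filter, Finset.mem_product, Finset.mem_Icc,
        Finset.mem_singleton, Prod.mk.injEq]
      constructor
      · rintro ⟨⟨⟨hp, hq⟩, hi, hj⟩, heq⟩
        have e1 : (p - 1) + q * k + (j - 1) * (k : ℤ) ^ 2 =
            a + b * k + c * (k : ℤ) ^ 2 := by linear_combination heq - habc
        obtain ⟨u1, u2, u3⟩ := base3_unique (k : ℤ) _ _ _ _ _ _ hk0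
          (by omega) (by omega) (by omega) (by omega) (by omega) (by omega)
          ha ha' hb hb' hc hc' e1
        exact ⟨⟨by omega, by omega⟩, hi, by omega⟩
      · rintro ⟨⟨hp, hq⟩, hi, hj⟩
        refine ⟨⟨⟨by omega, by omega⟩, hi, ⟨by omega, by omega⟩⟩, ?_⟩
        subst hp hq hj
        linear_combination habc
    rw [hset]
    simp [Int.toNat_of_nonneg hk0.le]
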